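/- Let γₙ be the standard Gaussian probability measure on ℝⁿ, with density (2π)^(−n/2)·exp(−‖x‖²/2). Then for any 0 < ε < 1, the measure of the set {y ∈ ℝⁿ : ‖y‖² ≤ (1 − ε)n} is at most exp(−ε²n/4). -/

import Mathlib

open MeasureTheory Real

/-- The standard Gaussian probability measure on `ℝⁿ`, with density
`(2π)^{-n/2} e^{-‖x‖²/2}` with respect to Lebesgue measure. -/
noncomputable def stdGaussian (n : ℕ) : Measure (EuclideanSpace ℝ (Fin n)) :=
  volume.withDensity fun x =>
    ENNReal.ofReal ((2 * Real.pi) ^ (-(n : ℝ) / 2) * Real.exp (-‖x‖ ^ 2 / 2))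

lemma log_one_add_ge_aux (x : ℝ) (hx : 0 ≤ x) : x - x ^ 2 / 2 ≤ Real.log (1 + x) := by
  have hmono : MonotoneOn (fun y : ℝ => Real.log (1 + y) - (y - y ^ 2 / 2)) (Set.Ici 0) := by
    apply monotoneOn_of_deriv_nonneg (convex_Ici 0)
    · apply ContinuousOn.sub
      · apply ContinuousOn.log (by fun_prop)
        intro x hx
        simp only [Set.mem_Ici] at hx; positivity
      · fun_prop
    · intro y hy
      have hy' : (0:ℝ) < 1 + y := by
        simp only [interior_Ici, Set.mem_Ioi] at hy; linarith
      apply DifferentiableAt.differentiableWithinAt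
      fun_prop (disch := positivity)
    · intro y hy
      simp only [interior_Ici, Set.mem_Ioi] at hy
      have hy' : (0:ℝ) < 1 + y := by linarith
      have h1 : HasDerivAt (fun y : ℝ => Real.log (1 + y) - (y - y ^ 2 / 2))
          (1/(1+y) - (1 - y)) y := by
        have := ((hasDerivAt_id y).const_add 1).log (ne_of_gt hy')
        have h2 : HasDerivAt (fun y : ℝ => y - y ^ 2 / 2) (1 - 2 * y / 2) y := by
          simpa using (hasDerivAt_id y).fun_sub ((hasDerivAt_pow 2 y).div_const 2)
        simpa [one_div] using this.fun_sub h2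
      rw [h1.deriv]
      rw [div_sub' (ne_of_gt hy')]
      apply div_nonneg _ hy'.le
      nlinarith
  have := hmono (Set.self_mem_Ici) (Set.mem_Ici.2 hx) hx
  simpa using this

lemma integrable_rexp_neg_mul_sq_norm_aux (n : ℕ) {c : ℝ} (hc : 0 < c) :
    Integrable (fun v : EuclideanSpace ℝ (Fin n) => rexp (-c * ‖v‖ ^ 2)) := by
  have h := (GaussianFourier.integrable_cexp_neg_mul_sq_norm_add (V := EuclideanSpace ℝ (Fin n))
    (b := (c : ℂ)) (by simpa using hc) 0 0).norm
  refine h.congr (Filter.Eventually.of_forall fun v => ?_)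
  simp only [Complex.norm_exp]
  norm_num
  left
  rw [← Complex.ofReal_pow, Complex.ofReal_re]

/-- Lemma 2.1(1): for `0 < ε < 1`, the standard Gaussian measure of
`{y : ‖y‖² ≤ (1 - ε)n}` is at most `exp(-ε²n/4)`. -/
theorem stmt_6 (n : ℕ) (ε : ℝ) (hε0 : 0 < ε) (hε1 : ε < 1) :
    stdGaussian n {y : EuclideanSpace ℝ (Fin n) | ‖y‖ ^ 2 ≤ (1 - ε) * n} ≤
      ENNReal.ofReal (Real.exp (-(ε ^ 2) * n / 4)) := by
  set S := {y : EuclideanSpace ℝ (Fin n) | ‖y‖ ^ 2 ≤ (1 - ε) * n} with hSdef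
  have hS : MeasurableSet S := by
    have hcont : Continuous fun y : EuclideanSpace ℝ (Fin n) => ‖y‖ ^ 2 := by fun_prop
    exact measurableSet_le hcont.measurable measurable_const
  set c : ℝ := (1 + ε) / 2 with hcdef
  have hc : 0 < c := by positivity
  set B : ℝ := (2 * Real.pi) ^ (-(n : ℝ) / 2) * Real.exp (ε / 2 * ((1 - ε) * n)) with hBdef
  have hπ : (0:ℝ) < Real.pi := Real.pi_pos
  rw [stdGaussian, withDensity_apply _ hS]
  have step1 : ∫⁻ x in S, ENNReal.ofReal ((2 * Real.pi) ^ (-(n : ℝ) / 2) * rexp (-‖x‖ ^ 2 / 2))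
      ≤ ∫⁻ x : EuclideanSpace ℝ (Fin n), ENNReal.ofReal (B * rexp (-c * ‖x‖ ^ 2)) := by
    refine le_trans (setLIntegral_mono' hS fun x hx => ?_) (setLIntegral_le_lintegral _ _)
    refine ENNReal.ofReal_le_ofReal ?_
    rw [hBdef, mul_assoc, ← Real.exp_add]
    have hq : ‖x‖ ^ 2 ≤ (1 - ε) * n := hx
    refine mul_le_mul_of_nonneg_left (Real.exp_le_exp.2 ?_) (by positivity)
    nlinarith [hq, hε0.le]
  refine le_trans step1 ?_
  have hB : 0 ≤ B := by positivity
  have step2 : ∫⁻ x : EuclideanSpace ℝ (Fin n), ENNReal.ofReal (B * rexp (-c * ‖x‖ ^ 2))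
      = ENNReal.ofReal (B * (Real.pi / c) ^ ((n : ℝ) / 2)) := by
    have hint := integrable_rexp_neg_mul_sq_norm_aux n hc
    rw [← ofReal_integral_eq_lintegral_ofReal (hint.const_mul B)
      (Filter.Eventually.of_forall fun x => by positivity), integral_const_mul,
      GaussianFourier.integral_rexp_neg_mul_sq_norm hc, finrank_euclideanSpace_fin]
  rw [step2]
  refine ENNReal.ofReal_le_ofReal ?_
  -- arithmetic: B * (π/c)^(n/2) ≤ exp(-ε²n/4)
  have hkey : (2 * Real.pi) ^ (-(n : ℝ) / 2) * (Real.pi / c) ^ ((n : ℝ) / 2)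
      = (1 + ε) ^ (-((n : ℝ) / 2)) := by
    have h2c : Real.pi / c / (2 * Real.pi) = (1 + ε)⁻¹ := by
      rw [hcdef]
      have h1 : (1:ℝ) + ε ≠ 0 := by linarith
      field_simp
    rw [neg_div, Real.rpow_neg (by positivity), inv_mul_eq_div,
      ← Real.div_rpow (by positivity) (by positivity), h2c,
      Real.inv_rpow (by positivity), ← Real.rpow_neg (by positivity)]
  rw [hBdef, mul_comm ((2 * Real.pi) ^ (-(n : ℝ) / 2)) _, mul_assoc, hkey,
    Real.rpow_def_of_pos (by linarith : (0:ℝ) < 1 + ε), ← Real.exp_add, Real.exp_le_exp]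
  have hlog : ε - ε ^ 2 / 2 ≤ Real.log (1 + ε) := log_one_add_ge_aux ε hε0.le
  have hn : (0:ℝ) ≤ n := Nat.cast_nonneg n
  nlinarith [mul_le_mul_of_nonneg_left hlog (by positivity : (0:ℝ) ≤ (n:ℝ) / 2)]
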